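/- Let A be a left-symmetric conformal algebra, i.e. a C[∂]-module with a C-bilinear λ-product a_λ b satisfying (∂a)_λ b = -λ a_λ b, a_λ(∂b) = (∂+λ) a_λ b, and the left-symmetry identity (a_λ b)_{λ+μ} c - a_λ(b_μ c) = (b_μ a)_{λ+μ} c - b_μ(a_λ c). Then the λ-bracket [a_λ b] := a_λ b - b_{-λ-∂} a defines a Lie conformal algebra structure on A (i.e. it satisfies conformal sesquilinearity, skew-symmetry [a_λ b] = -[b_{-λ-∂} a], and the Jacobi identity [a_λ[b_μ c]] = [[a_λ b]_{λ+μ} c] + [b_μ[a_λ c]]). -/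

import Mathlib

open Finsupp

noncomputable section

/-- Coefficient of `λ^k` of the substitution `μ ↦ -λ-∂` applied to the polynomial
`Σₙ μ^n • (f n)` with coefficients in `A` (with `∂` acting on the coefficients). -/
def csubst {A : Type} [AddCommGroup A] [Module ℂ A]
    (D : Module.End ℂ A) (f : ℕ →₀ A) (k : ℕ) : A :=
  f.sum fun n c => ((-1 : ℂ) ^ n * (n.choose k : ℂ)) • (D ^ (n - k)) c

/-- Coefficient of `λ^n μ^m` of `(a_λ b)_{λ+μ} c`, for a λ-product `m₁` on `A`
and a λ-action `m₂` of `A` on `V`. -/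
def comp2 {A V : Type} [AddCommGroup A] [Module ℂ A] [AddCommGroup V] [Module ℂ V]
    (m₁ : A →ₗ[ℂ] A →ₗ[ℂ] (ℕ →₀ A)) (m₂ : A →ₗ[ℂ] V →ₗ[ℂ] (ℕ →₀ V))
    (a b : A) (c : V) (n m : ℕ) : V :=
  ∑ i ∈ Finset.range (n + 1),
    (((m + n - i).choose (n - i) : ℕ) : ℂ) • m₂ (m₁ a b i) c (m + n - i)

/-- A conformal algebra: a `ℂ[∂]`-module with a sesquilinear λ-product,
encoded coefficientwise: `mul a b n` is the coefficient of `λ^n` in `a_λ b`. -/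
structure ConfAlg (A : Type) [AddCommGroup A] [Module ℂ A] where
  D : Module.End ℂ A
  mul : A →ₗ[ℂ] A →ₗ[ℂ] (ℕ →₀ A)
  sesq_left_zero : ∀ a b, mul (D a) b 0 = 0
  sesq_left : ∀ a b n, mul (D a) b (n + 1) = - mul a b n
  sesq_right_zero : ∀ a b, mul a (D b) 0 = D (mul a b 0)
  sesq_right : ∀ a b n, mul a (D b) (n + 1) = D (mul a b (n + 1)) + mul a b n

/-- A Lie conformal algebra: skew-symmetry `[a_λ b] = -[b_{-λ-∂} a]` and the
Jacobi identity `[a_λ[b_μ c]] = [[a_λ b]_{λ+μ} c] + [b_μ[a_λ c]]`, coefficientwise. -/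
structure LieConfAlg (A : Type) [AddCommGroup A] [Module ℂ A] extends ConfAlg A where
  skew : ∀ a b k, mul a b k = - csubst D (mul b a) k
  jacobi : ∀ a b c n m,
    mul a (mul b c m) n = comp2 mul mul a b c n m + mul b (mul a c n) m

/-- A left-symmetric conformal algebra:
`(a_λ b)_{λ+μ} c - a_λ(b_μ c) = (b_μ a)_{λ+μ} c - b_μ(a_λ c)`, coefficientwise. -/
structure LSConfAlg (A : Type) [AddCommGroup A] [Module ℂ A] extends ConfAlg A where
  lsym : ∀ a b c n m,
    comp2 mul mul a b c n m - mul a (mul b c m) n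
      = comp2 mul mul b a c m n - mul b (mul a c n) m

noncomputable section ConfAux
variable {M N P : Type} [AddCommGroup M] [Module ℂ M] [AddCommGroup N] [Module ℂ N]
  [AddCommGroup P] [Module ℂ P]

/-- shift: multiplication by the formal variable. -/
def sh : (ℕ →₀ M) →ₗ[ℂ] (ℕ →₀ M) := Finsupp.lmapDomain M ℂ (· + 1)

lemma sh_single (n : ℕ) (c : M) : sh (single n c) = single (n + 1) c := by
  simp [sh, Finsupp.mapDomain_single]

lemma sh_apply_zero (f : ℕ →₀ M) : sh f 0 = 0 := by
  refine Finsupp.mapDomain_notin_range _ _ ?_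
  rintro ⟨a, ha⟩; simp at ha

lemma sh_apply_succ (f : ℕ →₀ M) (n : ℕ) : sh f (n + 1) = f n :=
  Finsupp.mapDomain_apply (fun a b h => by omega) f n

/-- coefficientwise application of a linear map. -/
def cw (φ : M →ₗ[ℂ] N) : (ℕ →₀ M) →ₗ[ℂ] (ℕ →₀ N) := Finsupp.mapRange.linearMap φ

lemma cw_single (φ : M →ₗ[ℂ] N) (n : ℕ) (c : M) : cw φ (single n c) = single n (φ c) := by
  simp [cw]

lemma cw_apply (φ : M →ₗ[ℂ] N) (f : ℕ →₀ M) (n : ℕ) : cw φ f n = φ (f n) := by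
  simp [cw]

lemma cw_sh (φ : M →ₗ[ℂ] N) (f : ℕ →₀ M) : cw φ (sh f) = sh (cw φ f) := by
  induction f using Finsupp.induction_linear with
  | zero => simp
  | add f g hf hg => simp [map_add, hf, hg]
  | single n c => simp [sh_single, cw_single]

lemma cw_cw (φ : M →ₗ[ℂ] N) (ψ : N →ₗ[ℂ] P) (f : ℕ →₀ M) :
    cw ψ (cw φ f) = cw (ψ ∘ₗ φ) f := by
  induction f using Finsupp.induction_linear with
  | zero => simp
  | add f g hf hg => simp [map_add, hf, hg]
  | single n c => simp [cw_single]

/-- substitution of the formal variable by the operator `E`, coefficients embedded by `ι`. -/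
def sb (E : Module.End ℂ N) (ι : M →ₗ[ℂ] N) : (ℕ →₀ M) →ₗ[ℂ] N :=
  Finsupp.lsum ℂ fun n => (E ^ n) ∘ₗ ι

lemma sb_single (E : Module.End ℂ N) (ι : M →ₗ[ℂ] N) (n : ℕ) (c : M) :
    sb E ι (single n c) = (E ^ n) (ι c) := by simp [sb]

lemma sb_sh (E : Module.End ℂ N) (ι : M →ₗ[ℂ] N) (f : ℕ →₀ M) :
    sb E ι (sh f) = E (sb E ι f) := by
  induction f using Finsupp.induction_linear with
  | zero => simp
  | add f g hf hg => simp [map_add, hf, hg]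
  | single n c => rw [sh_single, sb_single, sb_single, pow_succ']; rfl

lemma sb_cw (E : Module.End ℂ N) (ι : P →ₗ[ℂ] N) (φ : M →ₗ[ℂ] P) (f : ℕ →₀ M) :
    sb E ι (cw φ f) = sb E (ι ∘ₗ φ) f := by
  induction f using Finsupp.induction_linear with
  | zero => simp
  | add f g hf hg => simp [map_add, hf, hg]
  | single n c => rw [cw_single, sb_single, sb_single]; rfl

lemma pow_comm_of (F : N →ₗ[ℂ] P) (E : Module.End ℂ N) (E' : Module.End ℂ P)
    (h : ∀ x, F (E x) = E' (F x)) (n : ℕ) (y : N) : F ((E ^ n) y) = (E' ^ n) (F y) := by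
  induction n generalizing y with
  | zero => simp
  | succ n ih =>
      have : (E ^ (n+1)) y = (E ^ n) (E y) := by rw [pow_succ]; rfl
      rw [this, ih, h]
      rw [pow_succ]; rfl

/-- master lemma: push a linear map through a substitution. -/
lemma sb_comp (F : N →ₗ[ℂ] P) (E : Module.End ℂ N) (E' : Module.End ℂ P)
    (ι : M →ₗ[ℂ] N) (h : ∀ x, F (E x) = E' (F x)) (f : ℕ →₀ M) :
    F (sb E ι f) = sb E' (F ∘ₗ ι) f := by
  induction f using Finsupp.induction_linear with
  | zero => simp
  | add f g hf hg => simp [map_add, hf, hg]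
  | single n c => rw [sb_single, sb_single, pow_comm_of F E E' h]; rfl

lemma sb_congr (E : Module.End ℂ N) (ι ι' : M →ₗ[ℂ] N) (h : ∀ c, ι c = ι' c) (f : ℕ →₀ M) :
    sb E ι f = sb E ι' f := by
  induction f using Finsupp.induction_linear with
  | zero => simp
  | add f g hf hg => simp [map_add, hf, hg]
  | single n c => rw [sb_single, sb_single, h]

lemma sb_iota_sub (E : Module.End ℂ N) (ι ι' : M →ₗ[ℂ] N) (f : ℕ →₀ M) :
    sb E (ι - ι') f = sb E ι f - sb E ι' f := by
  induction f using Finsupp.induction_linear with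
  | zero => simp
  | add f g hf hg =>
      rw [map_add, map_add, map_add, hf, hg]; abel
  | single n c => simp [sb_single, map_sub]

lemma shpow_single (n : ℕ) (c : M) : ((sh : (ℕ →₀ M) →ₗ[ℂ] _) ^ n) (single 0 c) = single n c := by
  induction n with
  | zero => simp
  | succ n ih =>
      have : ((sh : (ℕ →₀ M) →ₗ[ℂ] _) ^ (n+1)) (single 0 c) = sh (((sh : (ℕ →₀ M) →ₗ[ℂ] _) ^ n) (single 0 c)) := by
        rw [pow_succ']; rfl
      rw [this, ih, sh_single]

lemma sb_sh_id (f : ℕ →₀ M) : sb sh (lsingle (0:ℕ) : M →ₗ[ℂ] _) f = f := by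
  induction f using Finsupp.induction_linear with
  | zero => simp
  | add f g hf hg => simp [map_add, hf, hg]
  | single n c => rw [sb_single]; simp [shpow_single]

lemma shpow_apply (i : ℕ) (f : ℕ →₀ M) (n : ℕ) :
    ((sh : (ℕ →₀ M) →ₗ[ℂ] _) ^ i) f n = if i ≤ n then f (n - i) else 0 := by
  induction i generalizing n with
  | zero => simp
  | succ i ih =>
      have h1 : ((sh : (ℕ →₀ M) →ₗ[ℂ] _) ^ (i+1)) f = sh (((sh : (ℕ →₀ M) →ₗ[ℂ] _) ^ i) f) := by
        rw [pow_succ']; rfl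
      rw [h1]
      cases n with
      | zero => rw [sh_apply_zero]; simp
      | succ n =>
          rw [sh_apply_succ, ih]
          by_cases h : i ≤ n
          · rw [if_pos h, if_pos (by omega)]
            congr 1; omega
          · rw [if_neg h, if_neg (by omega)]

lemma cw_congr (φ ψ : M →ₗ[ℂ] N) (h : ∀ x, φ x = ψ x) (f : ℕ →₀ M) : cw φ f = cw ψ f := by
  ext n; rw [cw_apply, cw_apply, h]

lemma cwpow_apply (φ : M →ₗ[ℂ] M) (i : ℕ) (f : ℕ →₀ M) (n : ℕ) :
    ((cw φ) ^ i) f n = (φ ^ i) (f n) := by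
  induction i generalizing f with
  | zero => simp
  | succ i ih =>
      have h1 : ((cw φ) ^ (i+1)) f = ((cw φ) ^ i) (cw φ f) := by rw [pow_succ]; rfl
      have h2 : (φ ^ (i+1)) (f n) = (φ ^ i) (φ (f n)) := by rw [pow_succ]; rfl
      rw [h1, h2, ih, cw_apply]

lemma cwpow_single (φ : M →ₗ[ℂ] M) (i : ℕ) (k : ℕ) (h : M) :
    ((cw φ) ^ i) (single k h) = single k ((φ ^ i) h) := by
  ext n; rw [cwpow_apply]
  classical
  simp [Finsupp.single_apply]
  split <;> simp

/-- push a coefficientwise operator through a substitution. -/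
lemma sb_push_cw {A' : Type} [AddCommGroup A'] [Module ℂ A'] (DD : Module.End ℂ A')
    (E : Module.End ℂ N) (ι : A' →ₗ[ℂ] N) (G : Module.End ℂ N)
    (hcomm : ∀ p, G (E p) = E (G p)) (hι : ∀ c, ι (DD c) = G (ι c)) (g : ℕ →₀ A') :
    sb E ι (cw DD g) = G (sb E ι g) := by
  rw [sb_cw, sb_comp G E E ι hcomm g]
  exact sb_congr _ _ _ (fun c => by simpa using hι c) g


end ConfAux

noncomputable section ConfOps
open Finsupp
variable {A : Type} [AddCommGroup A] [Module ℂ A] (D : Module.End ℂ A)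

/-- `∂` acting on coefficients of a one-variable polynomial. -/
def dmE : Module.End ℂ (ℕ →₀ A) := cw D
/-- the operator `-λ - ∂` on one-variable polynomials. -/
def ELam : Module.End ℂ (ℕ →₀ A) := -(sh + dmE D)
/-- multiplication by `λ` (outer variable). -/
def Xl : Module.End ℂ (ℕ →₀ (ℕ →₀ A)) := sh
/-- multiplication by `μ` (inner variable). -/
def Xm : Module.End ℂ (ℕ →₀ (ℕ →₀ A)) := cw sh
/-- `∂` on coefficients of two-variable polynomials. -/
def d2E : Module.End ℂ (ℕ →₀ (ℕ →₀ A)) := cw (dmE D)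
/-- the operator `-λ-μ-∂` on two-variable polynomials. -/
def E2 : Module.End ℂ (ℕ →₀ (ℕ →₀ A)) := -(Xl + Xm + d2E D)
def NL : Module.End ℂ (ℕ →₀ (ℕ →₀ A)) := -(Xl + d2E D)
def NM : Module.End ℂ (ℕ →₀ (ℕ →₀ A)) := -(Xm + d2E D)
def ι1 : A →ₗ[ℂ] (ℕ →₀ A) := lsingle 0
def ιl : (ℕ →₀ A) →ₗ[ℂ] (ℕ →₀ (ℕ →₀ A)) := cw ι1
def ιm : (ℕ →₀ A) →ₗ[ℂ] (ℕ →₀ (ℕ →₀ A)) := lsingle 0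
def ι00 : A →ₗ[ℂ] (ℕ →₀ (ℕ →₀ A)) := ιm ∘ₗ ι1
/-- the substitution `λ ↦ -λ-∂`. -/
def sig : (ℕ →₀ A) →ₗ[ℂ] (ℕ →₀ A) := sb (ELam D) ι1
/-- substitution of the variable of a 1-var polynomial by `λ+μ`. -/
def Hm : (ℕ →₀ A) →ₗ[ℂ] (ℕ →₀ (ℕ →₀ A)) := sb (Xl + Xm) ι00
def ThE : (ℕ →₀ A) →ₗ[ℂ] (ℕ →₀ (ℕ →₀ A)) := sb (E2 D) ι00
def Thl : (ℕ →₀ A) →ₗ[ℂ] (ℕ →₀ (ℕ →₀ A)) := sb Xl ι00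
def Thm : (ℕ →₀ A) →ₗ[ℂ] (ℕ →₀ (ℕ →₀ A)) := sb Xm ι00
/-- `p(x,y) ↦ p(μ, -λ-μ-∂)`. -/
def Psi : (ℕ →₀ (ℕ →₀ A)) →ₗ[ℂ] (ℕ →₀ (ℕ →₀ A)) := sb Xm (ThE D)
/-- `p(x,y) ↦ p(-λ-μ-∂, μ)`. -/
def PsiB : (ℕ →₀ (ℕ →₀ A)) →ₗ[ℂ] (ℕ →₀ (ℕ →₀ A)) := sb (E2 D) Thm
/-- `p(x,y) ↦ p(λ, -λ-μ-∂)`. -/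
def Xi : (ℕ →₀ (ℕ →₀ A)) →ₗ[ℂ] (ℕ →₀ (ℕ →₀ A)) := sb Xl (ThE D)
/-- `p(x,y) ↦ p(-λ-μ-∂, λ)`. -/
def XiB : (ℕ →₀ (ℕ →₀ A)) →ₗ[ℂ] (ℕ →₀ (ℕ →₀ A)) := sb (E2 D) Thl
/-- the swap of the two variables. -/
def swp : (ℕ →₀ (ℕ →₀ A)) →ₗ[ℂ] (ℕ →₀ (ℕ →₀ A)) := sb Xm Thl

-- basic commutations
lemma dm_sh (g : ℕ →₀ A) : dmE D (sh g) = sh (dmE D g) := cw_sh D g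
lemma Xm_Xl (p : ℕ →₀ (ℕ →₀ A)) : Xm (Xl p) = Xl (Xm p) := cw_sh sh p
lemma d2_Xl (p : ℕ →₀ (ℕ →₀ A)) : d2E D (Xl p) = Xl (d2E D p) := cw_sh (dmE D) p
lemma Xm_d2 (p : ℕ →₀ (ℕ →₀ A)) : Xm (d2E D p) = d2E D (Xm p) := by
  rw [show Xm (d2E D p) = cw (sh ∘ₗ dmE D) p from cw_cw _ _ _,
    show d2E D (Xm p) = cw (dmE D ∘ₗ sh) p from cw_cw _ _ _]
  exact cw_congr _ _ (fun x => (dm_sh D x).symm) p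

lemma E2_Xl (p : ℕ →₀ (ℕ →₀ A)) : E2 D (Xl p) = Xl (E2 D p) := by
  simp only [E2, LinearMap.neg_apply, LinearMap.add_apply, Xm_Xl, d2_Xl, map_add, map_neg]

lemma E2_Xm (p : ℕ →₀ (ℕ →₀ A)) : E2 D (Xm p) = Xm (E2 D p) := by
  simp only [E2, LinearMap.neg_apply, LinearMap.add_apply, map_add, map_neg]
  rw [Xm_Xl, Xm_d2]

lemma E2_d2 (p : ℕ →₀ (ℕ →₀ A)) : E2 D (d2E D p) = d2E D (E2 D p) := by
  simp only [E2, LinearMap.neg_apply, LinearMap.add_apply, map_add, map_neg]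
  rw [d2_Xl, Xm_d2]

-- embeddings intertwining
lemma ι00_apply (c : A) : ι00 c = single 0 (single (0:ℕ) c) := rfl
lemma dm_ι1 (c : A) : dmE D (ι1 c) = ι1 (D c) := by
  simp [dmE, ι1, cw_single]
lemma d2_ι00 (c : A) : d2E D (ι00 c) = ι00 (D c) := by
  simp only [ι00_apply, d2E]
  rw [cw_single]
  congr 1
  exact dm_ι1 D c
lemma ιl_sh (g : ℕ →₀ A) : ιl (sh g) = Xl (ιl g) := cw_sh ι1 g
lemma ιl_dm (g : ℕ →₀ A) : ιl (dmE D g) = d2E D (ιl g) := by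
  rw [show ιl (dmE D g) = cw (ι1 ∘ₗ D) g from cw_cw _ _ _,
    show d2E D (ιl g) = cw (dmE D ∘ₗ ι1) g from cw_cw _ _ _]
  exact cw_congr _ _ (fun x => (dm_ι1 D x).symm) g
lemma ιm_sh (g : ℕ →₀ A) : ιm (sh g) = Xm (ιm g) := by
  simp only [ιm, Xm, lsingle_apply, cw_single]
lemma ιm_dm (g : ℕ →₀ A) : ιm (dmE D g) = d2E D (ιm g) := by
  simp only [ιm, d2E, lsingle_apply, cw_single]

-- sigma lemmas
lemma sig_sh (g : ℕ →₀ A) : sig D (sh g) = ELam D (sig D g) := sb_sh _ _ _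
lemma sig_dm (g : ℕ →₀ A) : sig D (dmE D g) = dmE D (sig D g) := by
  have h1 : sig D (dmE D g) = sb (ELam D) (ι1 ∘ₗ D) g := sb_cw _ _ _ _
  have hc : ∀ x, dmE D (ELam D x) = ELam D (dmE D x) := by
    intro x
    simp only [ELam, LinearMap.neg_apply, LinearMap.add_apply, map_add, map_neg, dm_sh]
  have h2 : dmE D (sig D g) = sb (ELam D) (dmE D ∘ₗ ι1) g := sb_comp _ _ _ _ hc g
  rw [h1, h2]
  exact sb_congr _ _ _ (fun c => (dm_ι1 D c).symm) g
lemma sig_EL (g : ℕ →₀ A) : sig D (ELam D g) = sh (sig D g) := by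
  simp only [ELam, LinearMap.neg_apply, LinearMap.add_apply, map_add, map_neg, sig_sh, sig_dm]
  abel
lemma sig_ι1 (c : A) : sig D (ι1 c) = ι1 c := by
  simp only [sig, ι1]
  rw [show (lsingle (0:ℕ) : A →ₗ[ℂ] _) c = single (0:ℕ) c from rfl, sb_single]
  simp
lemma sig_sig (g : ℕ →₀ A) : sig D (sig D g) = g := by
  have h1 : sig D (sig D g) = sb sh (sig D ∘ₗ ι1) g := sb_comp _ _ _ _ (sig_EL D) g
  rw [h1, sb_congr sh (sig D ∘ₗ ι1) (lsingle 0) (fun c => by simpa [ι1] using sig_ι1 D c) g]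
  exact sb_sh_id g

-- apply shapes
lemma ELam_apply (g : ℕ →₀ A) : ELam D g = -(sh g + dmE D g) := rfl
lemma E2_apply (p : ℕ →₀ (ℕ →₀ A)) : E2 D p = -(Xl p + Xm p + d2E D p) := rfl
lemma NL_apply (p : ℕ →₀ (ℕ →₀ A)) : NL D p = -(Xl p + d2E D p) := rfl
lemma NM_apply (p : ℕ →₀ (ℕ →₀ A)) : NM D p = -(Xm p + d2E D p) := rfl

-- base values at constants
lemma Hm_ι1 (c : A) : Hm (ι1 c) = ι00 c := by
  simp only [Hm, ι1, lsingle_apply, sb_single, pow_zero, Module.End.one_apply]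
lemma ThE_ι1 (c : A) : ThE D (ι1 c) = ι00 c := by
  simp only [ThE, ι1, lsingle_apply, sb_single, pow_zero, Module.End.one_apply]
lemma Thl_ι1 (c : A) : Thl (ι1 c) = ι00 c := by
  simp only [Thl, ι1, lsingle_apply, sb_single, pow_zero, Module.End.one_apply]
lemma Thm_ι1 (c : A) : Thm (ι1 c) = ι00 c := by
  simp only [Thm, ι1, lsingle_apply, sb_single, pow_zero, Module.End.one_apply]

lemma Thl_eq_ιl (g : ℕ →₀ A) : Thl g = ιl g := by
  induction g using Finsupp.induction_linear with
  | zero => simp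
  | add f g hf hg => simp [map_add, hf, hg]
  | single n c =>
      rw [show Thl (single n c) = (Xl ^ n) (ι00 c) from sb_single _ _ _ _, ι00_apply,
        show (Xl ^ n) (single 0 (single (0:ℕ) c)) = single n (single (0:ℕ) c) from shpow_single n _,
        ιl, cw_single, ι1, lsingle_apply]

lemma Thm_eq_ιm (g : ℕ →₀ A) : Thm g = ιm g := by
  induction g using Finsupp.induction_linear with
  | zero => simp
  | add f g hf hg => simp [map_add, hf, hg]
  | single n c =>
      rw [show Thm (single n c) = (Xm ^ n) (ι00 c) from sb_single _ _ _ _, ι00_apply,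
        show (Xm ^ n) (single 0 (single (0:ℕ) c)) = single (0:ℕ) ((sh ^ n) (single (0:ℕ) c)) from cwpow_single _ _ _ _,
        shpow_single, ιm, lsingle_apply]

-- pushing ELam through substitutions into 2 variables
lemma Hm_dm (g : ℕ →₀ A) : Hm (dmE D g) = d2E D (Hm g) := by
  refine sb_push_cw D _ _ _ (fun p => ?_) (fun c => (d2_ι00 D c).symm) g
  simp only [LinearMap.add_apply, map_add, d2_Xl, Xm_d2]
lemma Hm_EL (g : ℕ →₀ A) : Hm (ELam D g) = E2 D (Hm g) := by
  rw [ELam_apply, map_neg, map_add, show Hm (sh g) = ((Xl + Xm : Module.End ℂ (ℕ →₀ (ℕ →₀ A)))) (Hm g) from sb_sh _ _ g,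
    Hm_dm, E2_apply, LinearMap.add_apply]

lemma ThE_sh (g : ℕ →₀ A) : ThE D (sh g) = E2 D (ThE D g) := sb_sh _ _ g
lemma ThE_dm (g : ℕ →₀ A) : ThE D (dmE D g) = d2E D (ThE D g) := by
  refine sb_push_cw D _ _ _ (fun p => (E2_d2 D p).symm) (fun c => (d2_ι00 D c).symm) g
lemma Thl_sh (g : ℕ →₀ A) : Thl (sh g) = Xl (Thl g) := sb_sh _ _ g
lemma Thm_sh (g : ℕ →₀ A) : Thm (sh g) = Xm (Thm g) := sb_sh _ _ g

lemma Key2 (g : ℕ →₀ A) : Hm (sig D g) = ThE D g := by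
  rw [show sig D g = sb (ELam D) ι1 g from rfl, sb_comp Hm _ (E2 D) ι1 (Hm_EL D) g]
  exact sb_congr _ _ _ (fun c => by simpa using Hm_ι1 c) g

lemma ιl_ι1 (c : A) : ιl (ι1 c) = ι00 c := by
  simp only [ιl, ι1, lsingle_apply, cw_single, ι00_apply]
lemma ιm_ι1 (c : A) : ιm (ι1 c) = ι00 c := rfl

lemma ιl_sig (g : ℕ →₀ A) : ιl (sig D g) = sb (NL D) ι00 g := by
  rw [show sig D g = sb (ELam D) ι1 g from rfl,
    sb_comp ιl _ (NL D) ι1 (fun x => by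
      rw [ELam_apply, map_neg, map_add, ιl_sh, ιl_dm, NL_apply]) g]
  exact sb_congr _ _ _ (fun c => by simpa using ιl_ι1 c) g

lemma ιm_sig (g : ℕ →₀ A) : ιm (sig D g) = sb (NM D) ι00 g := by
  rw [show sig D g = sb (ELam D) ι1 g from rfl,
    sb_comp ιm _ (NM D) ι1 (fun x => by
      rw [ELam_apply, map_neg, map_add, ιm_sh, ιm_dm, NM_apply]) g]
  exact sb_congr _ _ _ (fun c => rfl) g

-- the two-variable substitution operators: behaviour on Xl, Xm
lemma Psi_Xl (p : ℕ →₀ (ℕ →₀ A)) : Psi D (Xl p) = Xm (Psi D p) := sb_sh _ _ p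
lemma Psi_Xm (p : ℕ →₀ (ℕ →₀ A)) : Psi D (Xm p) = E2 D (Psi D p) := by
  rw [show Xm p = cw sh p from rfl, show Psi D (cw sh p) = sb Xm (ThE D ∘ₗ sh) p from sb_cw _ _ _ _,
    show E2 D (Psi D p) = sb Xm (E2 D ∘ₗ ThE D) p from sb_comp _ _ _ _ (E2_Xm D) p]
  exact sb_congr _ _ _ (fun g => by simpa using ThE_sh D g) p
lemma PsiB_Xl (p : ℕ →₀ (ℕ →₀ A)) : PsiB D (Xl p) = E2 D (PsiB D p) := sb_sh _ _ p
lemma PsiB_Xm (p : ℕ →₀ (ℕ →₀ A)) : PsiB D (Xm p) = Xm (PsiB D p) := by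
  rw [show Xm p = cw sh p from rfl, show PsiB D (cw sh p) = sb (E2 D) (Thm ∘ₗ sh) p from sb_cw _ _ _ _,
    show Xm (PsiB D p) = sb (E2 D) (Xm ∘ₗ Thm) p from sb_comp _ _ _ _ (fun x => (E2_Xm D x).symm) p]
  exact sb_congr _ _ _ (fun g => by simpa using Thm_sh g) p
lemma Xi_Xl (p : ℕ →₀ (ℕ →₀ A)) : Xi D (Xl p) = Xl (Xi D p) := sb_sh _ _ p
lemma Xi_Xm (p : ℕ →₀ (ℕ →₀ A)) : Xi D (Xm p) = E2 D (Xi D p) := by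
  rw [show Xm p = cw sh p from rfl, show Xi D (cw sh p) = sb Xl (ThE D ∘ₗ sh) p from sb_cw _ _ _ _,
    show E2 D (Xi D p) = sb Xl (E2 D ∘ₗ ThE D) p from sb_comp _ _ _ _ (E2_Xl D) p]
  exact sb_congr _ _ _ (fun g => by simpa using ThE_sh D g) p
lemma XiB_Xl (p : ℕ →₀ (ℕ →₀ A)) : XiB D (Xl p) = E2 D (XiB D p) := sb_sh _ _ p
lemma XiB_Xm (p : ℕ →₀ (ℕ →₀ A)) : XiB D (Xm p) = Xl (XiB D p) := by
  rw [show Xm p = cw sh p from rfl, show XiB D (cw sh p) = sb (E2 D) (Thl ∘ₗ sh) p from sb_cw _ _ _ _,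
    show Xl (XiB D p) = sb (E2 D) (Xl ∘ₗ Thl) p from sb_comp _ _ _ _ (fun x => (E2_Xl D x).symm) p]
  exact sb_congr _ _ _ (fun g => by simpa using Thl_sh g) p
lemma swp_Xl (p : ℕ →₀ (ℕ →₀ A)) : swp (Xl p) = Xm (swp p) := sb_sh _ _ p
lemma swp_Xm (p : ℕ →₀ (ℕ →₀ A)) : swp (Xm p) = Xl (swp p) := by
  rw [show Xm p = cw sh p from rfl, show swp (cw sh p) = sb Xm (Thl ∘ₗ sh) p from sb_cw _ _ _ _,
    show Xl (swp p) = sb Xm (Xl ∘ₗ Thl) p from sb_comp _ _ _ _ (fun x => (Xm_Xl x).symm) p]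
  exact sb_congr _ _ _ (fun g => by simpa using Thl_sh g) p

-- base values of the 2-variable substitutions
lemma Psi_ι00 (c : A) : Psi D (ι00 c) = ι00 c := by
  rw [ι00_apply, show Psi D (single 0 (single (0:ℕ) c)) = (Xm ^ 0) (ThE D (single (0:ℕ) c)) from
    sb_single _ _ _ _, pow_zero, Module.End.one_apply, show (single (0:ℕ) c : ℕ →₀ A) = ι1 c from rfl,
    ThE_ι1]
  rfl
lemma PsiB_ι00 (c : A) : PsiB D (ι00 c) = ι00 c := by
  rw [ι00_apply, show PsiB D (single 0 (single (0:ℕ) c)) = ((E2 D) ^ 0) (Thm (single (0:ℕ) c)) from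
    sb_single _ _ _ _, pow_zero, Module.End.one_apply, show (single (0:ℕ) c : ℕ →₀ A) = ι1 c from rfl,
    Thm_ι1]
  rfl
lemma Xi_ι00 (c : A) : Xi D (ι00 c) = ι00 c := by
  rw [ι00_apply, show Xi D (single 0 (single (0:ℕ) c)) = (Xl ^ 0) (ThE D (single (0:ℕ) c)) from
    sb_single _ _ _ _, pow_zero, Module.End.one_apply, show (single (0:ℕ) c : ℕ →₀ A) = ι1 c from rfl,
    ThE_ι1]
  rfl
lemma XiB_ι00 (c : A) : XiB D (ι00 c) = ι00 c := by
  rw [ι00_apply, show XiB D (single 0 (single (0:ℕ) c)) = ((E2 D) ^ 0) (Thl (single (0:ℕ) c)) from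
    sb_single _ _ _ _, pow_zero, Module.End.one_apply, show (single (0:ℕ) c : ℕ →₀ A) = ι1 c from rfl,
    Thl_ι1]
  rfl
lemma swp_ι00 (c : A) : swp (ι00 c) = ι00 c := by
  rw [ι00_apply, show swp (single 0 (single (0:ℕ) c)) = (Xm ^ 0) (Thl (single (0:ℕ) c)) from
    sb_single _ _ _ _, pow_zero, Module.End.one_apply, show (single (0:ℕ) c : ℕ →₀ A) = ι1 c from rfl,
    Thl_ι1]
  rfl

-- C-lemmas
lemma C1 (g : ℕ →₀ A) : Psi D (Hm g) = ιl (sig D g) := by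
  rw [ιl_sig, show Hm g = sb ((Xl + Xm : Module.End ℂ (ℕ →₀ (ℕ →₀ A)))) ι00 g from rfl,
    sb_comp (Psi D) _ (NL D) ι00 (fun p => by
      rw [LinearMap.add_apply, map_add, Psi_Xl, Psi_Xm, NL_apply, E2_apply]
      abel) g]
  exact sb_congr _ _ _ (fun c => by simpa using Psi_ι00 D c) g

lemma C2 (g : ℕ →₀ A) : Psi D (ιl g) = ιm g := by
  rw [show ιl g = cw ι1 g from rfl, show Psi D (cw ι1 g) = sb Xm (ThE D ∘ₗ ι1) g from sb_cw _ _ _ _,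
    sb_congr Xm (ThE D ∘ₗ ι1) ι00 (fun c => by simpa using ThE_ι1 D c) g]
  exact Thm_eq_ιm g

lemma C3 (g : ℕ →₀ A) : PsiB D (Hm g) = ιl (sig D g) := by
  rw [ιl_sig, show Hm g = sb ((Xl + Xm : Module.End ℂ (ℕ →₀ (ℕ →₀ A)))) ι00 g from rfl,
    sb_comp (PsiB D) _ (NL D) ι00 (fun p => by
      rw [LinearMap.add_apply, map_add, PsiB_Xl, PsiB_Xm, NL_apply, E2_apply]
      abel) g]
  exact sb_congr _ _ _ (fun c => by simpa using PsiB_ι00 D c) g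

lemma C4 (g : ℕ →₀ A) : PsiB D (ιl g) = ThE D g := by
  rw [show ιl g = cw ι1 g from rfl,
    show PsiB D (cw ι1 g) = sb (E2 D) (Thm ∘ₗ ι1) g from sb_cw _ _ _ _]
  exact sb_congr _ _ _ (fun c => by simpa using Thm_ι1 c) g

lemma C5 (g : ℕ →₀ A) : Xi D (Hm g) = ιm (sig D g) := by
  rw [ιm_sig, show Hm g = sb ((Xl + Xm : Module.End ℂ (ℕ →₀ (ℕ →₀ A)))) ι00 g from rfl,
    sb_comp (Xi D) _ (NM D) ι00 (fun p => by
      rw [LinearMap.add_apply, map_add, Xi_Xl, Xi_Xm, NM_apply, E2_apply]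
      abel) g]
  exact sb_congr _ _ _ (fun c => by simpa using Xi_ι00 D c) g

lemma C6 (g : ℕ →₀ A) : Xi D (ιl g) = ιl g := by
  rw [show ιl g = cw ι1 g from rfl, show Xi D (cw ι1 g) = sb Xl (ThE D ∘ₗ ι1) g from sb_cw _ _ _ _,
    sb_congr Xl (ThE D ∘ₗ ι1) ι00 (fun c => by simpa using ThE_ι1 D c) g]
  exact Thl_eq_ιl g

lemma C7 (g : ℕ →₀ A) : XiB D (Hm g) = ιm (sig D g) := by
  rw [ιm_sig, show Hm g = sb ((Xl + Xm : Module.End ℂ (ℕ →₀ (ℕ →₀ A)))) ι00 g from rfl,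
    sb_comp (XiB D) _ (NM D) ι00 (fun p => by
      rw [LinearMap.add_apply, map_add, XiB_Xl, XiB_Xm, NM_apply, E2_apply]
      abel) g]
  exact sb_congr _ _ _ (fun c => by simpa using XiB_ι00 D c) g

lemma C8 (g : ℕ →₀ A) : XiB D (ιl g) = ThE D g := by
  rw [show ιl g = cw ι1 g from rfl,
    show XiB D (cw ι1 g) = sb (E2 D) (Thl ∘ₗ ι1) g from sb_cw _ _ _ _]
  exact sb_congr _ _ _ (fun c => by simpa using Thl_ι1 c) g

lemma swp_Hm (g : ℕ →₀ A) : swp (Hm g) = Hm g := by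
  rw [show Hm g = sb ((Xl + Xm : Module.End ℂ (ℕ →₀ (ℕ →₀ A)))) ι00 g from rfl,
    sb_comp (swp) _ ((Xl + Xm : Module.End ℂ (ℕ →₀ (ℕ →₀ A)))) ι00 (fun p => by
      rw [LinearMap.add_apply, map_add, swp_Xl, swp_Xm, LinearMap.add_apply]
      abel) g]
  exact sb_congr _ _ _ (fun c => by simpa using swp_ι00 c) g

lemma swp_ιl (g : ℕ →₀ A) : swp (ιl g) = ιm g := by
  rw [show ιl g = cw ι1 g from rfl, show swp (cw ι1 g) = sb Xm (Thl ∘ₗ ι1) g from sb_cw _ _ _ _,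
    sb_congr Xm (Thl ∘ₗ ι1) ι00 (fun c => by simpa using Thl_ι1 c) g]
  exact Thm_eq_ιm g

lemma Psi_Thl (g : ℕ →₀ A) : Psi D (Thl g) = Thm g := by
  rw [show Thl g = sb Xl ι00 g from rfl,
    sb_comp (Psi D) Xl Xm ι00 (Psi_Xl D) g]
  exact sb_congr _ _ _ (fun c => by simpa using Psi_ι00 D c) g

lemma Xi_Thl (g : ℕ →₀ A) : Xi D (Thl g) = Thl g := by
  rw [show Thl g = sb Xl ι00 g from rfl,
    sb_comp (Xi D) Xl Xl ι00 (Xi_Xl D) g]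
  exact sb_congr _ _ _ (fun c => by simpa using Xi_ι00 D c) g

lemma Psi_swp (p : ℕ →₀ (ℕ →₀ A)) : Psi D (swp p) = PsiB D p := by
  rw [show swp p = sb Xm Thl p from rfl,
    sb_comp (Psi D) Xm (E2 D) Thl (Psi_Xm D) p]
  exact sb_congr _ _ _ (fun g => by simpa using Psi_Thl D g) p

lemma Xi_swp (p : ℕ →₀ (ℕ →₀ A)) : Xi D (swp p) = XiB D p := by
  rw [show swp p = sb Xm Thl p from rfl,
    sb_comp (Xi D) Xm (E2 D) Thl (Xi_Xm D) p]
  exact sb_congr _ _ _ (fun g => by simpa using Xi_Thl D g) p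

-- coefficient lemmas
lemma Xl_pow_apply (i : ℕ) (p : ℕ →₀ (ℕ →₀ A)) (n : ℕ) :
    ((Xl ^ i) p) n = if i ≤ n then p (n - i) else 0 := shpow_apply i p n

lemma Xm_pow_apply (i : ℕ) (p : ℕ →₀ (ℕ →₀ A)) (n : ℕ) :
    ((Xm ^ i) p) n = (sh ^ i) (p n) := cwpow_apply sh i p n

lemma swp_coeff (p : ℕ →₀ (ℕ →₀ A)) (n m : ℕ) : swp p n m = p m n := by
  induction p using Finsupp.induction_linear with
  | zero => simp
  | add f g hf hg => simp [map_add, Finsupp.add_apply, hf, hg]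
  | single i g =>
      rw [show swp (single i g) = (Xm ^ i) (Thl g) from sb_single _ _ _ _,
        Xm_pow_apply, Thl_eq_ιl, show (ιl g) n = single (0:ℕ) (g n) from cw_apply _ _ _,
        shpow_single]
      classical
      rw [Finsupp.single_apply, Finsupp.single_apply]
      split <;> simp [Finsupp.single_apply]

lemma pow_XlXm (j : ℕ) (e : A) (n m : ℕ) :
    (((Xl + Xm : Module.End ℂ (ℕ →₀ (ℕ →₀ A))) ^ j) (ι00 e)) n m
      = if n + m = j then (((n+m).choose n : ℕ) : ℂ) • e else 0 := by
  induction j generalizing n m with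
  | zero =>
      simp only [pow_zero, Module.End.one_apply, ι00_apply]
      classical
      rw [Finsupp.single_apply]
      by_cases hn : n = 0
      · subst hn
        rw [if_pos rfl, Finsupp.single_apply]
        by_cases hm : m = 0
        · subst hm; simp
        · rw [if_neg (by omega), if_neg (by omega)]
      · rw [if_neg (by omega), if_neg (by omega)]; simp
  | succ j ih =>
      have hstep : ((Xl + Xm : Module.End ℂ (ℕ →₀ (ℕ →₀ A))) ^ (j+1)) (ι00 e)
          = (Xl + Xm : Module.End ℂ (ℕ →₀ (ℕ →₀ A)))
            (((Xl + Xm : Module.End ℂ (ℕ →₀ (ℕ →₀ A))) ^ j) (ι00 e)) := by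
        rw [pow_succ']; rfl
      set q := ((Xl + Xm : Module.End ℂ (ℕ →₀ (ℕ →₀ A))) ^ j) (ι00 e) with hq
      have happ : ∀ n' m' : ℕ, ((Xl + Xm : Module.End ℂ (ℕ →₀ (ℕ →₀ A))) q) n' m'
          = (Xl q) n' m' + (sh (q n')) m' := by
        intro n' m'
        rw [LinearMap.add_apply, Finsupp.add_apply, Finsupp.add_apply,
          show (Xm q) n' = sh (q n') from cw_apply _ _ _]
      rw [hstep, happ]
      cases n with
      | zero =>
          rw [show (Xl q) 0 = 0 from sh_apply_zero q, Finsupp.coe_zero, Pi.zero_apply, zero_add]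
          cases m with
          | zero => rw [sh_apply_zero]; rw [if_neg (by omega)]
          | succ m =>
              rw [sh_apply_succ, ih]
              by_cases h : 0 + m = j
              · rw [if_pos h, if_pos (by omega)]
                simp
              · rw [if_neg h, if_neg (by omega)]
      | succ n =>
          rw [show (Xl q) (n+1) = q n from sh_apply_succ q n]
          cases m with
          | zero =>
              rw [sh_apply_zero, add_zero, ih]
              by_cases h : n + 0 = j
              · rw [if_pos h, if_pos (by omega)]
                simp only [add_zero, Nat.choose_self]
              · rw [if_neg h, if_neg (by omega)]
          | succ m =>
              rw [sh_apply_succ, ih, ih]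
              by_cases h : n + (m + 1) = j
              · rw [if_pos h, if_pos (by omega), if_pos (by omega)]
                rw [← add_smul]
                congr 1
                have h1 : n + (m + 1) = n + m + 1 := by omega
                have h2 : n + 1 + m = n + m + 1 := by omega
                have h3 : n + 1 + (m + 1) = (n + m + 1) + 1 := by omega
                rw [h1, h2, h3, Nat.choose_succ_succ (n + m + 1) n]
                push_cast
                ring
              · rw [if_neg h, if_neg (by omega), if_neg (by omega), add_zero]

lemma Hm_coeff (g : ℕ →₀ A) (n m : ℕ) :
    Hm g n m = (((n+m).choose n : ℕ) : ℂ) • g (n+m) := by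
  induction g using Finsupp.induction_linear with
  | zero => simp
  | add f g hf hg => simp [map_add, Finsupp.add_apply, hf, hg, smul_add]
  | single j e =>
      rw [show Hm (single j e) = (((Xl + Xm : Module.End ℂ (ℕ →₀ (ℕ →₀ A))) ^ j)) (ι00 e) from
        sb_single _ _ _ _, pow_XlXm]
      classical
      rw [Finsupp.single_apply]
      by_cases h : n + m = j
      · rw [if_pos h, if_pos (by omega)]
      · rw [if_neg h, if_neg (by omega), smul_zero]

lemma ELam_pow_coeff (n : ℕ) (c : A) (k : ℕ) :
    ((ELam D ^ n) (single (0:ℕ) c)) k = ((-1:ℂ)^n * (n.choose k : ℂ)) • (D ^ (n-k)) c := by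
  induction n generalizing k with
  | zero =>
      simp only [pow_zero, Module.End.one_apply]
      classical
      rw [Finsupp.single_apply]
      cases k with
      | zero => simp
      | succ k => simp
  | succ n ih =>
      have hstep : ((ELam D) ^ (n+1)) (single (0:ℕ) c) = ELam D ((ELam D ^ n) (single (0:ℕ) c)) := by
        rw [pow_succ']; rfl
      set q := (ELam D ^ n) (single (0:ℕ) c) with hq
      have happ : ∀ k', (ELam D q) k' = -(sh q k' + D (q k')) := by
        intro k'
        rw [ELam_apply, Finsupp.neg_apply, Finsupp.add_apply,
          show (dmE D q) k' = D (q k') from cw_apply _ _ _]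
      rw [hstep, happ]
      cases k with
      | zero =>
          rw [sh_apply_zero, zero_add, ih, map_smul]
          have hD : D ((D ^ n) c) = (D ^ (n+1)) c := by rw [pow_succ']; rfl
          rw [Nat.sub_zero, Nat.sub_zero, hD, ← neg_smul]
          congr 1
          simp only [Nat.choose_zero_right, Nat.cast_one, mul_one]
          ring
      | succ k =>
          rw [sh_apply_succ, ih, ih, map_smul]
          by_cases h : k + 1 ≤ n
          · have hD : D ((D ^ (n - (k+1))) c) = (D ^ (n - k)) c := by
              rw [show n - k = (n - (k+1)) + 1 from by omega, pow_succ']; rfl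
            rw [hD, ← add_smul, ← neg_smul]
            have : n + 1 - (k + 1) = n - k := by omega
            rw [this]
            congr 1
            push_cast [Nat.choose_succ_succ n k]
            ring
          · have hz : n.choose (k+1) = 0 := Nat.choose_eq_zero_of_lt (by omega)
            have h2 : (n+1).choose (k+1) = n.choose k := by
              rw [Nat.choose_succ_succ n k, hz, add_zero]
            rw [hz, h2, Nat.cast_zero, mul_zero, zero_smul, add_zero, ← neg_smul]
            have h1 : n + 1 - (k + 1) = n - k := by omega
            rw [h1]
            congr 1
            ring

lemma csubst_eq_sig (f : ℕ →₀ A) (k : ℕ) : csubst D f k = sig D f k := by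
  induction f using Finsupp.induction_linear with
  | zero => simp [csubst]
  | add f g hf hg =>
      rw [map_add, Finsupp.add_apply, ← hf, ← hg, csubst, csubst, csubst,
        Finsupp.sum_add_index' (fun n => by simp) (fun n c d => by rw [map_add, smul_add])]
  | single n c =>
      rw [csubst, Finsupp.sum_single_index (by simp),
        show sig D (single n c) = ((ELam D) ^ n) (ι1 c) from sb_single _ _ _ _,
        show (ι1 c : ℕ →₀ A) = single (0:ℕ) c from rfl, ELam_pow_coeff]

-- auxiliary operator abbreviations
def PL : Module.End ℂ (ℕ →₀ (ℕ →₀ A)) := Xl + d2E D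
def PM : Module.End ℂ (ℕ →₀ (ℕ →₀ A)) := Xm + d2E D
def MXX : Module.End ℂ (ℕ →₀ (ℕ →₀ A)) := -(Xl + Xm)
lemma PL_apply (p : ℕ →₀ (ℕ →₀ A)) : PL D p = Xl p + d2E D p := rfl
lemma PM_apply (p : ℕ →₀ (ℕ →₀ A)) : PM D p = Xm p + d2E D p := rfl
lemma MXX_apply (p : ℕ →₀ (ℕ →₀ A)) : MXX p = -(Xl p + Xm p) := rfl

-- general coefficient lemmas for the T-shaped maps
lemma Lcoeff (φ : A →ₗ[ℂ] (ℕ →₀ A)) (f : ℕ →₀ A) (n m : ℕ) :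
    (sb Xm (ιl ∘ₗ φ) f) n m = φ (f m) n := by
  induction f using Finsupp.induction_linear with
  | zero => simp
  | add f g hf hg => simp [map_add, Finsupp.add_apply, hf, hg]
  | single j v =>
      rw [sb_single, Xm_pow_apply, LinearMap.comp_apply,
        show (ιl (φ v)) n = single (0:ℕ) ((φ v) n) from cw_apply _ _ _, shpow_single]
      classical
      rw [Finsupp.single_apply, Finsupp.single_apply]
      by_cases h : j = m
      · rw [if_pos h, if_pos h]
      · rw [if_neg h, if_neg h, map_zero, Finsupp.zero_apply]

lemma LBcoeff (φ : A →ₗ[ℂ] (ℕ →₀ A)) (f : ℕ →₀ A) (n m : ℕ) :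
    (sb Xl (ιm ∘ₗ φ) f) n m = φ (f n) m := by
  induction f using Finsupp.induction_linear with
  | zero => simp
  | add f g hf hg => simp [map_add, Finsupp.add_apply, hf, hg]
  | single j v =>
      rw [sb_single, Xl_pow_apply]
      classical
      rw [Finsupp.single_apply]
      by_cases h : j = n
      · subst h
        rw [if_pos rfl, if_pos (by omega), Nat.sub_self, LinearMap.comp_apply,
          show (ιm (φ v) : ℕ →₀ (ℕ →₀ A)) = single (0:ℕ) (φ v) from rfl, Finsupp.single_eq_same]
      · rw [if_neg h, map_zero, Finsupp.zero_apply]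
        by_cases h2 : j ≤ n
        · rw [if_pos h2, LinearMap.comp_apply,
            show (ιm (φ v) : ℕ →₀ (ℕ →₀ A)) = single (0:ℕ) (φ v) from rfl,
            Finsupp.single_apply, if_neg (by omega), Finsupp.zero_apply]
        · rw [if_neg h2, Finsupp.zero_apply]

lemma cgen (φ : A →ₗ[ℂ] (ℕ →₀ A)) (f : ℕ →₀ A) (n m : ℕ) :
    (sb Xl (Hm ∘ₗ φ) f) n m
      = ∑ i ∈ Finset.range (n + 1), (((m + n - i).choose (n - i) : ℕ) : ℂ) • (φ (f i)) (m + n - i) := by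
  induction f using Finsupp.induction_linear with
  | zero => simp
  | add f g hf hg =>
      simp only [map_add, Finsupp.add_apply, hf, hg, smul_add, Finset.sum_add_distrib]
  | single i d =>
      classical
      rw [sb_single]
      by_cases hi : i ≤ n
      · rw [Finset.sum_eq_single i (fun i' _ hne => by
            rw [Finsupp.single_apply, if_neg (fun h => hne h.symm), map_zero,
              Finsupp.zero_apply, smul_zero])
            (fun hnotin => absurd (Finset.mem_range.mpr (by omega)) hnotin),
          Finsupp.single_eq_same, LinearMap.comp_apply, Xl_pow_apply, if_pos hi, Hm_coeff,
          show n - i + m = m + n - i from by omega]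
      · rw [Xl_pow_apply, if_neg hi, Finsupp.zero_apply,
          Finset.sum_eq_zero (fun i' hi' => by
            rw [Finsupp.single_apply, if_neg (by rw [Finset.mem_range] at hi'; omega),
              map_zero, Finsupp.zero_apply, smul_zero])]

section WithMul
variable (Mb : A →ₗ[ℂ] A →ₗ[ℂ] (ℕ →₀ A))

/-- `a_x (g(y))` where `g` is a 1-var polynomial. -/
def Lmap (a : A) : (ℕ →₀ A) →ₗ[ℂ] (ℕ →₀ (ℕ →₀ A)) := sb Xm (ιl ∘ₗ Mb a)
/-- `b_y (g(x))`. -/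
def LmapB (b : A) : (ℕ →₀ A) →ₗ[ℂ] (ℕ →₀ (ℕ →₀ A)) := sb Xl (ιm ∘ₗ Mb b)
/-- `(g(x))_{x+y} c`. -/
def Cmap (c : A) : (ℕ →₀ A) →ₗ[ℂ] (ℕ →₀ (ℕ →₀ A)) := sb Xl (Hm ∘ₗ Mb.flip c)
/-- `c_{-x-y-∂}(g(x))`. -/
def Gmap (c : A) : (ℕ →₀ A) →ₗ[ℂ] (ℕ →₀ (ℕ →₀ A)) := sb Xl (ThE D ∘ₗ Mb c)
/-- `(g(y))_{-x-∂} a`. -/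
def Smap (a : A) : (ℕ →₀ A) →ₗ[ℂ] (ℕ →₀ (ℕ →₀ A)) := sb Xm (ιl ∘ₗ (sig D ∘ₗ Mb.flip a))
/-- `(g(x))_{-y-∂} b`. -/
def SmapB (b : A) : (ℕ →₀ A) →ₗ[ℂ] (ℕ →₀ (ℕ →₀ A)) := sb Xl (ιm ∘ₗ (sig D ∘ₗ Mb.flip b))

-- base values
lemma Lmap_base (a d : A) : Lmap Mb a (ι1 d) = ιl (Mb a d) := by
  rw [show (ι1 d : ℕ →₀ A) = single (0:ℕ) d from rfl,
    show Lmap Mb a (single (0:ℕ) d) = (Xm ^ 0) ((ιl ∘ₗ Mb a) d) from sb_single _ _ _ _]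
  simp
lemma LmapB_base (b d : A) : LmapB Mb b (ι1 d) = ιm (Mb b d) := by
  rw [show (ι1 d : ℕ →₀ A) = single (0:ℕ) d from rfl,
    show LmapB Mb b (single (0:ℕ) d) = (Xl ^ 0) ((ιm ∘ₗ Mb b) d) from sb_single _ _ _ _]
  simp
lemma Cmap_base (c d : A) : Cmap Mb c (ι1 d) = Hm (Mb d c) := by
  rw [show (ι1 d : ℕ →₀ A) = single (0:ℕ) d from rfl,
    show Cmap Mb c (single (0:ℕ) d) = (Xl ^ 0) ((Hm ∘ₗ Mb.flip c) d) from sb_single _ _ _ _]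
  simp
lemma Gmap_base (c d : A) : Gmap D Mb c (ι1 d) = ThE D (Mb c d) := by
  rw [show (ι1 d : ℕ →₀ A) = single (0:ℕ) d from rfl,
    show Gmap D Mb c (single (0:ℕ) d) = (Xl ^ 0) ((ThE D ∘ₗ Mb c) d) from sb_single _ _ _ _]
  simp
lemma Smap_base (a d : A) : Smap D Mb a (ι1 d) = ιl (sig D (Mb d a)) := by
  rw [show (ι1 d : ℕ →₀ A) = single (0:ℕ) d from rfl,
    show Smap D Mb a (single (0:ℕ) d) = (Xm ^ 0) ((ιl ∘ₗ (sig D ∘ₗ Mb.flip a)) d) from sb_single _ _ _ _]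
  simp
lemma SmapB_base (b d : A) : SmapB D Mb b (ι1 d) = ιm (sig D (Mb d b)) := by
  rw [show (ι1 d : ℕ →₀ A) = single (0:ℕ) d from rfl,
    show SmapB D Mb b (single (0:ℕ) d) = (Xl ^ 0) ((ιm ∘ₗ (sig D ∘ₗ Mb.flip b)) d) from sb_single _ _ _ _]
  simp

-- ELam-pushing through the T-shaped maps
lemma Lmap_EL (a : A) (hA2 : ∀ a b, Mb a (D b) = dmE D (Mb a b) + sh (Mb a b)) (g : ℕ →₀ A) :
    Lmap Mb a (ELam D g) = E2 D (Lmap Mb a g) := by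
  have hdm : Lmap Mb a (dmE D g) = PL D (Lmap Mb a g) := by
    refine sb_push_cw D Xm (ιl ∘ₗ Mb a) (PL D) (fun p => ?_) (fun x => ?_) g
    · rw [PL_apply, PL_apply, map_add, Xm_Xl, Xm_d2]
    · simp only [LinearMap.comp_apply]
      rw [hA2, map_add, ιl_dm, ιl_sh, PL_apply]
      abel
  rw [ELam_apply, map_neg, map_add, show Lmap Mb a (sh g) = Xm (Lmap Mb a g) from sb_sh _ _ g,
    hdm, E2_apply, PL_apply]
  abel

lemma LmapB_EL (b : A) (hA2 : ∀ a b, Mb a (D b) = dmE D (Mb a b) + sh (Mb a b)) (g : ℕ →₀ A) :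
    LmapB Mb b (ELam D g) = E2 D (LmapB Mb b g) := by
  have hdm : LmapB Mb b (dmE D g) = PM D (LmapB Mb b g) := by
    refine sb_push_cw D Xl (ιm ∘ₗ Mb b) (PM D) (fun p => ?_) (fun x => ?_) g
    · rw [PM_apply, PM_apply, map_add, Xm_Xl, d2_Xl]
    · simp only [LinearMap.comp_apply]
      rw [hA2, map_add, ιm_dm, ιm_sh, PM_apply]
      abel
  rw [ELam_apply, map_neg, map_add, show LmapB Mb b (sh g) = Xl (LmapB Mb b g) from sb_sh _ _ g,
    hdm, E2_apply, PM_apply]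
  abel

lemma Smap_EL (a : A) (hA1 : ∀ a b, Mb (D a) b = -(sh (Mb a b))) (g : ℕ →₀ A) :
    Smap D Mb a (ELam D g) = E2 D (Smap D Mb a g) := by
  have hdm : Smap D Mb a (dmE D g) = PL D (Smap D Mb a g) := by
    refine sb_push_cw D Xm _ (PL D) (fun p => ?_) (fun x => ?_) g
    · rw [PL_apply, PL_apply, map_add, Xm_Xl, Xm_d2]
    · simp only [LinearMap.comp_apply, LinearMap.flip_apply]
      rw [hA1, map_neg, sig_sh, ELam_apply, map_neg, map_neg, neg_neg, map_add, ιl_sh, ιl_dm, PL_apply]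
  rw [ELam_apply, map_neg, map_add, show Smap D Mb a (sh g) = Xm (Smap D Mb a g) from sb_sh _ _ g,
    hdm, E2_apply, PL_apply]
  abel

lemma SmapB_EL (b : A) (hA1 : ∀ a b, Mb (D a) b = -(sh (Mb a b))) (g : ℕ →₀ A) :
    SmapB D Mb b (ELam D g) = E2 D (SmapB D Mb b g) := by
  have hdm : SmapB D Mb b (dmE D g) = PM D (SmapB D Mb b g) := by
    refine sb_push_cw D Xl _ (PM D) (fun p => ?_) (fun x => ?_) g
    · rw [PM_apply, PM_apply, map_add, Xm_Xl, d2_Xl]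
    · simp only [LinearMap.comp_apply, LinearMap.flip_apply]
      rw [hA1, map_neg, sig_sh, ELam_apply, map_neg, map_neg, neg_neg, map_add, ιm_sh, ιm_dm, PM_apply]
  rw [ELam_apply, map_neg, map_add, show SmapB D Mb b (sh g) = Xl (SmapB D Mb b g) from sb_sh _ _ g,
    hdm, E2_apply, PM_apply]
  abel

lemma Cmap_EL (c : A) (hA1 : ∀ a b, Mb (D a) b = -(sh (Mb a b))) (g : ℕ →₀ A) :
    Cmap Mb c (ELam D g) = Xm (Cmap Mb c g) := by
  have hdm : Cmap Mb c (dmE D g) = MXX (Cmap Mb c g) := by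
    refine sb_push_cw D Xl _ MXX (fun p => ?_) (fun x => ?_) g
    · rw [MXX_apply, MXX_apply, map_neg, map_add, Xm_Xl]
    · simp only [LinearMap.comp_apply, LinearMap.flip_apply]
      rw [hA1, map_neg,
        show Hm (sh (Mb x c)) = ((Xl + Xm : Module.End ℂ (ℕ →₀ (ℕ →₀ A)))) (Hm (Mb x c)) from
          sb_sh _ _ _, MXX_apply, LinearMap.add_apply]
  rw [ELam_apply, map_neg, map_add, show Cmap Mb c (sh g) = Xl (Cmap Mb c g) from sb_sh _ _ g,
    hdm, MXX_apply]
  abel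

lemma Gmap_EL (c : A) (hA2 : ∀ a b, Mb a (D b) = dmE D (Mb a b) + sh (Mb a b)) (g : ℕ →₀ A) :
    Gmap D Mb c (ELam D g) = Xm (Gmap D Mb c g) := by
  have hdm : Gmap D Mb c (dmE D g) = MXX (Gmap D Mb c g) := by
    refine sb_push_cw D Xl _ MXX (fun p => ?_) (fun x => ?_) g
    · rw [MXX_apply, MXX_apply, map_neg, map_add, Xm_Xl]
    · simp only [LinearMap.comp_apply]
      rw [hA2, map_add, ThE_dm, ThE_sh, MXX_apply, E2_apply]
      abel
  rw [ELam_apply, map_neg, map_add, show Gmap D Mb c (sh g) = Xl (Gmap D Mb c g) from sb_sh _ _ g,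
    hdm, MXX_apply]
  abel

-- canonical forms of maps applied to substituted (σ) arguments
lemma Lmap_sig (a : A) (hA2 : ∀ a b, Mb a (D b) = dmE D (Mb a b) + sh (Mb a b)) (f : ℕ →₀ A) :
    Lmap Mb a (sig D f) = sb (E2 D) (ιl ∘ₗ Mb a) f := by
  rw [show sig D f = sb (ELam D) ι1 f from rfl,
    sb_comp (Lmap Mb a) (ELam D) (E2 D) ι1 (Lmap_EL D Mb a hA2) f]
  exact sb_congr _ _ _ (fun d => by
    simp only [LinearMap.comp_apply]
    rw [Lmap_base]) f

lemma LmapB_sig (b : A) (hA2 : ∀ a b, Mb a (D b) = dmE D (Mb a b) + sh (Mb a b)) (f : ℕ →₀ A) :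
    LmapB Mb b (sig D f) = sb (E2 D) (ιm ∘ₗ Mb b) f := by
  rw [show sig D f = sb (ELam D) ι1 f from rfl,
    sb_comp (LmapB Mb b) (ELam D) (E2 D) ι1 (LmapB_EL D Mb b hA2) f]
  exact sb_congr _ _ _ (fun d => by
    simp only [LinearMap.comp_apply]
    rw [LmapB_base]) f

lemma Smap_sig (a : A) (hA1 : ∀ a b, Mb (D a) b = -(sh (Mb a b))) (f : ℕ →₀ A) :
    Smap D Mb a (sig D f) = sb (E2 D) (ιl ∘ₗ (sig D ∘ₗ Mb.flip a)) f := by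
  rw [show sig D f = sb (ELam D) ι1 f from rfl,
    sb_comp (Smap D Mb a) (ELam D) (E2 D) ι1 (Smap_EL D Mb a hA1) f]
  exact sb_congr _ _ _ (fun d => by
    simp only [LinearMap.comp_apply]
    rw [Smap_base]
    simp only [LinearMap.flip_apply]) f

lemma SmapB_sig (b : A) (hA1 : ∀ a b, Mb (D a) b = -(sh (Mb a b))) (f : ℕ →₀ A) :
    SmapB D Mb b (sig D f) = sb (E2 D) (ιm ∘ₗ (sig D ∘ₗ Mb.flip b)) f := by
  rw [show sig D f = sb (ELam D) ι1 f from rfl,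
    sb_comp (SmapB D Mb b) (ELam D) (E2 D) ι1 (SmapB_EL D Mb b hA1) f]
  exact sb_congr _ _ _ (fun d => by
    simp only [LinearMap.comp_apply]
    rw [SmapB_base]
    simp only [LinearMap.flip_apply]) f

lemma Cmap_sig (c : A) (hA1 : ∀ a b, Mb (D a) b = -(sh (Mb a b))) (f : ℕ →₀ A) :
    Cmap Mb c (sig D f) = sb Xm (Hm ∘ₗ Mb.flip c) f := by
  rw [show sig D f = sb (ELam D) ι1 f from rfl,
    sb_comp (Cmap Mb c) (ELam D) Xm ι1 (Cmap_EL D Mb c hA1) f]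
  exact sb_congr _ _ _ (fun d => by
    simp only [LinearMap.comp_apply]
    rw [Cmap_base]
    simp only [LinearMap.flip_apply]) f

lemma Gmap_sig (c : A) (hA2 : ∀ a b, Mb a (D b) = dmE D (Mb a b) + sh (Mb a b)) (f : ℕ →₀ A) :
    Gmap D Mb c (sig D f) = sb Xm (ThE D ∘ₗ Mb c) f := by
  rw [show sig D f = sb (ELam D) ι1 f from rfl,
    sb_comp (Gmap D Mb c) (ELam D) Xm ι1 (Gmap_EL D Mb c hA2) f]
  exact sb_congr _ _ _ (fun d => by
    simp only [LinearMap.comp_apply]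
    rw [Gmap_base]) f

-- the S-lemmas: substitutions applied to the composite maps
lemma Psi_Cmap (a : A) (f : ℕ →₀ A) : Psi D (Cmap Mb a f) = Smap D Mb a f := by
  rw [show Cmap Mb a f = sb Xl (Hm ∘ₗ Mb.flip a) f from rfl,
    sb_comp (Psi D) Xl Xm _ (Psi_Xl D) f]
  exact sb_congr _ _ _ (fun d => by
    simp only [LinearMap.comp_apply]
    rw [C1]) f

lemma Psi_Lmap (b : A) (f : ℕ →₀ A) : Psi D (Lmap Mb b f) = sb (E2 D) (ιm ∘ₗ Mb b) f := by
  rw [show Lmap Mb b f = sb Xm (ιl ∘ₗ Mb b) f from rfl,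
    sb_comp (Psi D) Xm (E2 D) _ (Psi_Xm D) f]
  exact sb_congr _ _ _ (fun d => by
    simp only [LinearMap.comp_apply]
    rw [C2]) f

lemma PsiB_Cmap (a : A) (f : ℕ →₀ A) :
    PsiB D (Cmap Mb a f) = sb (E2 D) (ιl ∘ₗ (sig D ∘ₗ Mb.flip a)) f := by
  rw [show Cmap Mb a f = sb Xl (Hm ∘ₗ Mb.flip a) f from rfl,
    sb_comp (PsiB D) Xl (E2 D) _ (PsiB_Xl D) f]
  exact sb_congr _ _ _ (fun d => by
    simp only [LinearMap.comp_apply]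
    rw [C3]) f

lemma PsiB_Lmap (c : A) (f : ℕ →₀ A) : PsiB D (Lmap Mb c f) = sb Xm (ThE D ∘ₗ Mb c) f := by
  rw [show Lmap Mb c f = sb Xm (ιl ∘ₗ Mb c) f from rfl,
    sb_comp (PsiB D) Xm Xm _ (PsiB_Xm D) f]
  exact sb_congr _ _ _ (fun d => by
    simp only [LinearMap.comp_apply]
    rw [C4]) f

lemma Xi_Cmap (b : A) (f : ℕ →₀ A) : Xi D (Cmap Mb b f) = SmapB D Mb b f := by
  rw [show Cmap Mb b f = sb Xl (Hm ∘ₗ Mb.flip b) f from rfl,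
    sb_comp (Xi D) Xl Xl _ (Xi_Xl D) f]
  exact sb_congr _ _ _ (fun d => by
    simp only [LinearMap.comp_apply]
    rw [C5]) f

lemma Xi_Lmap (a : A) (f : ℕ →₀ A) : Xi D (Lmap Mb a f) = sb (E2 D) (ιl ∘ₗ Mb a) f := by
  rw [show Lmap Mb a f = sb Xm (ιl ∘ₗ Mb a) f from rfl,
    sb_comp (Xi D) Xm (E2 D) _ (Xi_Xm D) f]
  exact sb_congr _ _ _ (fun d => by
    simp only [LinearMap.comp_apply]
    rw [C6]) f

lemma XiB_Cmap (b : A) (f : ℕ →₀ A) :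
    XiB D (Cmap Mb b f) = sb (E2 D) (ιm ∘ₗ (sig D ∘ₗ Mb.flip b)) f := by
  rw [show Cmap Mb b f = sb Xl (Hm ∘ₗ Mb.flip b) f from rfl,
    sb_comp (XiB D) Xl (E2 D) _ (XiB_Xl D) f]
  exact sb_congr _ _ _ (fun d => by
    simp only [LinearMap.comp_apply]
    rw [C7]) f

lemma XiB_Lmap (c : A) (f : ℕ →₀ A) : XiB D (Lmap Mb c f) = Gmap D Mb c f := by
  rw [show Lmap Mb c f = sb Xm (ιl ∘ₗ Mb c) f from rfl,
    sb_comp (XiB D) Xm Xl _ (XiB_Xm D) f]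
  exact sb_congr _ _ _ (fun d => by
    simp only [LinearMap.comp_apply]
    rw [C8]) f

lemma swp_Cmap (c : A) (f : ℕ →₀ A) : swp (Cmap Mb c f) = sb Xm (Hm ∘ₗ Mb.flip c) f := by
  rw [show Cmap Mb c f = sb Xl (Hm ∘ₗ Mb.flip c) f from rfl,
    sb_comp (swp (A:=A)) Xl Xm _ swp_Xl f]
  exact sb_congr _ _ _ (fun d => by
    simp only [LinearMap.comp_apply]
    rw [swp_Hm]) f

lemma swp_Lmap (b : A) (f : ℕ →₀ A) : swp (Lmap Mb b f) = LmapB Mb b f := by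
  rw [show Lmap Mb b f = sb Xm (ιl ∘ₗ Mb b) f from rfl,
    sb_comp (swp (A:=A)) Xm Xl _ swp_Xm f]
  exact sb_congr _ _ _ (fun d => by
    simp only [LinearMap.comp_apply]
    rw [swp_ιl]) f

-- coefficient identification
lemma Lmap_coeff (a : A) (f : ℕ →₀ A) (n m : ℕ) : Lmap Mb a f n m = Mb a (f m) n :=
  Lcoeff (Mb a) f n m
lemma LmapB_coeff (b : A) (f : ℕ →₀ A) (n m : ℕ) : LmapB Mb b f n m = Mb b (f n) m :=
  LBcoeff (Mb b) f n m
lemma Smap_coeff (a : A) (f : ℕ →₀ A) (n m : ℕ) : Smap D Mb a f n m = sig D (Mb (f m) a) n := by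
  have h := Lcoeff (sig D ∘ₗ Mb.flip a) f n m
  simpa only [Smap, LinearMap.comp_apply, LinearMap.flip_apply] using h
lemma SmapB_coeff (b : A) (f : ℕ →₀ A) (n m : ℕ) : SmapB D Mb b f n m = sig D (Mb (f n) b) m := by
  have h := LBcoeff (sig D ∘ₗ Mb.flip b) f n m
  simpa only [SmapB, LinearMap.comp_apply, LinearMap.flip_apply] using h
lemma Cmap_coeff (c a b : A) (n m : ℕ) : Cmap Mb c (Mb a b) n m = comp2 Mb Mb a b c n m := by
  have h := cgen (Mb.flip c) (Mb a b) n m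
  simp only [LinearMap.flip_apply] at h
  rw [show Cmap Mb c (Mb a b) = sb Xl (Hm ∘ₗ Mb.flip c) (Mb a b) from rfl, h, comp2]

/-- left-symmetry in operator form. -/
lemma CLsw (hLsym : ∀ a b c n m,
      comp2 Mb Mb a b c n m - Mb a (Mb b c m) n = comp2 Mb Mb b a c m n - Mb b (Mb a c n) m)
    (a b c : A) :
    Cmap Mb c (Mb a b) - Lmap Mb a (Mb b c)
      = swp (Cmap Mb c (Mb b a) - Lmap Mb b (Mb a c)) := by
  refine Finsupp.ext fun n => Finsupp.ext fun m => ?_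
  rw [show (swp (Cmap Mb c (Mb b a) - Lmap Mb b (Mb a c))) n m
      = (Cmap Mb c (Mb b a) - Lmap Mb b (Mb a c)) m n from swp_coeff _ _ _,
    Finsupp.sub_apply, Finsupp.sub_apply, Finsupp.sub_apply, Finsupp.sub_apply,
    Cmap_coeff, Cmap_coeff, Lmap_coeff, Lmap_coeff]
  exact hLsym a b c n m

/-- the commutator λ-bracket. -/
def Bmap : A →ₗ[ℂ] A →ₗ[ℂ] (ℕ →₀ A) := Mb - (Mb.compr₂ (sig D)).flip

lemma Bmap_apply (a b : A) : Bmap D Mb a b = Mb a b - sig D (Mb b a) := by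
  simp [Bmap, LinearMap.sub_apply, LinearMap.flip_apply, LinearMap.compr₂_apply]

lemma Bmap_skew (a b : A) : Bmap D Mb a b = -(sig D (Bmap D Mb b a)) := by
  rw [Bmap_apply, Bmap_apply, map_sub, sig_sig]
  abel

lemma Bmap_sesqL (hA1 : ∀ a b, Mb (D a) b = -(sh (Mb a b)))
    (hA2 : ∀ a b, Mb a (D b) = dmE D (Mb a b) + sh (Mb a b)) (a b : A) :
    Bmap D Mb (D a) b = -(sh (Bmap D Mb a b)) := by
  rw [Bmap_apply, Bmap_apply, hA1, hA2, map_add, sig_dm, sig_sh, ELam_apply, map_sub]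
  abel

lemma Bmap_sesqR (hA1 : ∀ a b, Mb (D a) b = -(sh (Mb a b)))
    (hA2 : ∀ a b, Mb a (D b) = dmE D (Mb a b) + sh (Mb a b)) (a b : A) :
    Bmap D Mb a (D b) = dmE D (Bmap D Mb a b) + sh (Bmap D Mb a b) := by
  rw [Bmap_apply, Bmap_apply, hA2, hA1, map_neg, sig_sh, ELam_apply, map_sub, map_sub]
  abel

/-- the main two-variable identity: Jacobi for the commutator bracket. -/
lemma mainP2 (hA1 : ∀ a b, Mb (D a) b = -(sh (Mb a b)))
    (hA2 : ∀ a b, Mb a (D b) = dmE D (Mb a b) + sh (Mb a b))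
    (hLsym : ∀ a b c n m,
      comp2 Mb Mb a b c n m - Mb a (Mb b c m) n = comp2 Mb Mb b a c m n - Mb b (Mb a c n) m)
    (a b c : A) :
    Lmap Mb a (Mb b c) - Lmap Mb a (sig D (Mb c b))
      - Smap D Mb a (Mb b c) + Smap D Mb a (sig D (Mb c b))
    = (Cmap Mb c (Mb a b) - Cmap Mb c (sig D (Mb b a))
        - Gmap D Mb c (Mb a b) + Gmap D Mb c (sig D (Mb b a)))
      + (LmapB Mb b (Mb a c) - LmapB Mb b (sig D (Mb c a))
        - SmapB D Mb b (Mb a c) + SmapB D Mb b (sig D (Mb c a))) := by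
  set T1 := Lmap Mb a (Mb b c) with hT1
  set T2 := Lmap Mb a (sig D (Mb c b)) with hT2
  set T3 := Smap D Mb a (Mb b c) with hT3
  set T4 := Smap D Mb a (sig D (Mb c b)) with hT4
  set T5 := Cmap Mb c (Mb a b) with hT5
  set T6 := Cmap Mb c (sig D (Mb b a)) with hT6
  set T7 := Gmap D Mb c (Mb a b) with hT7
  set T8 := Gmap D Mb c (sig D (Mb b a)) with hT8
  set T9 := LmapB Mb b (Mb a c) with hT9
  set T10 := LmapB Mb b (sig D (Mb c a)) with hT10
  set T11 := SmapB D Mb b (Mb a c) with hT11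
  set T12 := SmapB D Mb b (sig D (Mb c a)) with hT12
  have h1 : T5 - T1 = T6 - T9 := by
    have hcl := CLsw Mb hLsym a b c
    rw [map_sub, swp_Cmap, swp_Lmap, ← Cmap_sig D Mb c hA1 (Mb b a)] at hcl
    exact hcl
  have h2 : T3 - T10 = T4 - T8 := by
    have e3 : T3 = Psi D (Cmap Mb a (Mb b c)) := (Psi_Cmap D Mb a (Mb b c)).symm
    have e10 : T10 = Psi D (Lmap Mb b (Mb c a)) := by
      rw [hT10, LmapB_sig D Mb b hA2 (Mb c a), ← Psi_Lmap D Mb b (Mb c a)]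
    have e4 : T4 = PsiB D (Cmap Mb a (Mb c b)) := by
      rw [hT4, Smap_sig D Mb a hA1 (Mb c b), ← PsiB_Cmap D Mb a (Mb c b)]
    have e8 : T8 = PsiB D (Lmap Mb c (Mb b a)) := by
      rw [hT8, Gmap_sig D Mb c hA2 (Mb b a), ← PsiB_Lmap D Mb c (Mb b a)]
    rw [e3, e10, e4, e8, ← map_sub, ← map_sub, CLsw Mb hLsym b c a, Psi_swp]
  have h3 : T11 - T2 = T12 - T7 := by
    have e11 : T11 = Xi D (Cmap Mb b (Mb a c)) := (Xi_Cmap D Mb b (Mb a c)).symm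
    have e2 : T2 = Xi D (Lmap Mb a (Mb c b)) := by
      rw [hT2, Lmap_sig D Mb a hA2 (Mb c b), ← Xi_Lmap D Mb a (Mb c b)]
    have e12 : T12 = XiB D (Cmap Mb b (Mb c a)) := by
      rw [hT12, SmapB_sig D Mb b hA1 (Mb c a), ← XiB_Cmap D Mb b (Mb c a)]
    have e7 : T7 = XiB D (Lmap Mb c (Mb a b)) := (XiB_Lmap D Mb c (Mb a b)).symm
    rw [e11, e2, e12, e7, ← map_sub, ← map_sub, CLsw Mb hLsym a c b, Xi_swp]
  have z1 : (T1 + T6) - (T5 + T9) = 0 := by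
    rw [show (T1 + T6) - (T5 + T9) = (T6 - T9) - (T5 - T1) from by abel, ← h1, sub_self]
  have z2 : (T3 - T10) - (T4 - T8) = 0 := sub_eq_zero.mpr h2
  have z3 : (T11 - T2) - (T12 - T7) = 0 := sub_eq_zero.mpr h3
  have key : (T1 - T2 - T3 + T4) - ((T5 - T6 - T7 + T8) + (T9 - T10 - T11 + T12))
      = ((T1 + T6) - (T5 + T9)) - ((T3 - T10) - (T4 - T8)) + ((T11 - T2) - (T12 - T7)) := by
    abel
  rw [z1, z2, z3] at key
  have key2 : (T1 - T2 - T3 + T4) - ((T5 - T6 - T7 + T8) + (T9 - T10 - T11 + T12)) = 0 := by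
    rw [key]; abel
  exact sub_eq_zero.mp key2

lemma jacobi_coeff (hA1 : ∀ a b, Mb (D a) b = -(sh (Mb a b)))
    (hA2 : ∀ a b, Mb a (D b) = dmE D (Mb a b) + sh (Mb a b))
    (hLsym : ∀ a b c n m,
      comp2 Mb Mb a b c n m - Mb a (Mb b c m) n = comp2 Mb Mb b a c m n - Mb b (Mb a c n) m)
    (a b c : A) (n m : ℕ) :
    Bmap D Mb a (Bmap D Mb b c m) n
      = comp2 (Bmap D Mb) (Bmap D Mb) a b c n m + Bmap D Mb b (Bmap D Mb a c n) m := by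
  have hL : Bmap D Mb a (Bmap D Mb b c m) n
      = (Lmap Mb a (Mb b c)) n m - (Lmap Mb a (sig D (Mb c b))) n m
        - (Smap D Mb a (Mb b c)) n m + (Smap D Mb a (sig D (Mb c b))) n m := by
    rw [show (Bmap D Mb b c) m = (Mb b c) m - (sig D (Mb c b)) m from by
        rw [Bmap_apply, Finsupp.sub_apply],
      Bmap_apply, Finsupp.sub_apply,
      map_sub (Mb a) ((Mb b c) m) ((sig D (Mb c b)) m), Finsupp.sub_apply,
      map_sub Mb ((Mb b c) m) ((sig D (Mb c b)) m), LinearMap.sub_apply,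
      map_sub (sig D), Finsupp.sub_apply,
      ← Lmap_coeff Mb a (Mb b c) n m, ← Lmap_coeff Mb a (sig D (Mb c b)) n m,
      ← Smap_coeff D Mb a (Mb b c) n m, ← Smap_coeff D Mb a (sig D (Mb c b)) n m]
    abel
  have hR : Bmap D Mb b (Bmap D Mb a c n) m
      = (LmapB Mb b (Mb a c)) n m - (LmapB Mb b (sig D (Mb c a))) n m
        - (SmapB D Mb b (Mb a c)) n m + (SmapB D Mb b (sig D (Mb c a))) n m := by
    rw [show (Bmap D Mb a c) n = (Mb a c) n - (sig D (Mb c a)) n from by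
        rw [Bmap_apply, Finsupp.sub_apply],
      Bmap_apply, Finsupp.sub_apply,
      map_sub (Mb b) ((Mb a c) n) ((sig D (Mb c a)) n), Finsupp.sub_apply,
      map_sub Mb ((Mb a c) n) ((sig D (Mb c a)) n), LinearMap.sub_apply,
      map_sub (sig D), Finsupp.sub_apply,
      ← LmapB_coeff Mb b (Mb a c) n m, ← LmapB_coeff Mb b (sig D (Mb c a)) n m,
      ← SmapB_coeff D Mb b (Mb a c) n m, ← SmapB_coeff D Mb b (sig D (Mb c a)) n m]
    abel
  have hcomp : comp2 (Bmap D Mb) (Bmap D Mb) a b c n m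
      = (Cmap Mb c (Mb a b)) n m - (Cmap Mb c (sig D (Mb b a))) n m
        - ((Gmap D Mb c (Mb a b)) n m - (Gmap D Mb c (sig D (Mb b a))) n m) := by
    have e := cgen ((Bmap D Mb).flip c) (Bmap D Mb a b) n m
    have e2 : comp2 (Bmap D Mb) (Bmap D Mb) a b c n m
        = (sb Xl (Hm ∘ₗ (Bmap D Mb).flip c) (Bmap D Mb a b)) n m := by
      rw [e, comp2]
      refine Finset.sum_congr rfl (fun i _ => by rw [LinearMap.flip_apply])
    rw [e2, sb_congr Xl (Hm ∘ₗ (Bmap D Mb).flip c) (Hm ∘ₗ Mb.flip c - ThE D ∘ₗ Mb c) (fun d => by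
        simp only [LinearMap.comp_apply, LinearMap.sub_apply, LinearMap.flip_apply]
        rw [Bmap_apply, map_sub, Key2]) (Bmap D Mb a b),
      sb_iota_sub, Bmap_apply D Mb a b,
      map_sub (sb Xl (Hm ∘ₗ Mb.flip c)) (Mb a b) (sig D (Mb b a)),
      map_sub (sb Xl (ThE D ∘ₗ Mb c)) (Mb a b) (sig D (Mb b a))]
    simp only [Finsupp.sub_apply]
    rfl
  rw [hL, hcomp, hR]
  have hmain := congrArg (fun p : ℕ →₀ (ℕ →₀ A) => p n m) (mainP2 D Mb hA1 hA2 hLsym a b c)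
  simp only [Finsupp.sub_apply, Finsupp.add_apply] at hmain
  rw [hmain]
  abel

end WithMul

lemma hA1_of (S : ConfAlg A) : ∀ a b, S.mul (S.D a) b = -(sh (S.mul a b)) := by
  intro a b
  refine Finsupp.ext fun k => ?_
  cases k with
  | zero => rw [S.sesq_left_zero, Finsupp.neg_apply, sh_apply_zero, neg_zero]
  | succ n => rw [S.sesq_left, Finsupp.neg_apply, sh_apply_succ]

lemma dm_apply (f : ℕ →₀ A) (k : ℕ) : dmE D f k = D (f k) := cw_apply D f k

lemma hA2_of (S : ConfAlg A) : ∀ a b, S.mul a (S.D b) = dmE S.D (S.mul a b) + sh (S.mul a b) := by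
  intro a b
  refine Finsupp.ext fun k => ?_
  cases k with
  | zero =>
      rw [S.sesq_right_zero, Finsupp.add_apply, sh_apply_zero, add_zero, dm_apply]
  | succ n =>
      rw [S.sesq_right, Finsupp.add_apply, sh_apply_succ, dm_apply]

end ConfOps

/-- the λ-bracket `[a_λ b] = a_λ b - b_{-λ-∂} a` makes a
left-symmetric conformal algebra into a Lie conformal algebra. -/
theorem subadjacent_lie_conformal {A : Type} [AddCommGroup A] [Module ℂ A]
    (S : LSConfAlg A) :
    ∃ L : LieConfAlg A, L.D = S.D ∧
      ∀ a b k, L.mul a b k = S.mul a b k - csubst S.D (S.mul b a) k := by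
  have hA1 := hA1_of S.toConfAlg
  have hA2 := hA2_of S.toConfAlg
  refine ⟨{ D := S.D
            mul := Bmap S.D S.mul
            sesq_left_zero := fun a b => by
              rw [Bmap_sesqL S.D S.mul hA1 hA2, Finsupp.neg_apply, sh_apply_zero, neg_zero]
            sesq_left := fun a b n => by
              rw [Bmap_sesqL S.D S.mul hA1 hA2, Finsupp.neg_apply, sh_apply_succ]
            sesq_right_zero := fun a b => by
              rw [Bmap_sesqR S.D S.mul hA1 hA2, Finsupp.add_apply, sh_apply_zero, add_zero, dm_apply]
            sesq_right := fun a b n => by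
              rw [Bmap_sesqR S.D S.mul hA1 hA2, Finsupp.add_apply, sh_apply_succ, dm_apply]
            skew := fun a b k => by
              rw [csubst_eq_sig S.D, ← Finsupp.neg_apply, ← Bmap_skew S.D S.mul a b]
            jacobi := fun a b c n m => jacobi_coeff S.D S.mul hA1 hA2 S.lsym a b c n m }, rfl, ?_⟩
  intro a b k
  show Bmap S.D S.mul a b k = _
  rw [csubst_eq_sig S.D, Bmap_apply, Finsupp.sub_apply]
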